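/- For every u ∈ ℂ, with the block operators L = [[1, uτJ − τ],[0, 1 − uJ]] and M = [[1, τ],[uσ, 1 + uJ]] on C₀ ⊕ C₁, one has M·L = [[1, 0],[uσ, (1 − uT)(1 − uJ)]]. -/

import Mathlib

/- Formalization of a statement from "Ihara Zeta functions of infinite weighted graphs"
   (A. Deitmar).  Context: `X` is a connected graph of bounded valency, `w` is a positive
   weight function on oriented edges (darts) with finite total weight. -/

open scoped BigOperators
open SimpleGraph

attribute [local instance 10] Classical.propDecidable
noncomputable local instance (priority := 10) {α : Type*} : DecidableEq α := Classical.decEq _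

variable {V : Type*}

/-- The standard basis vector of `ℓ²(ι)` at `i`. -/
noncomputable def bv {ι : Type*} (i : ι) : lp (fun _ : ι => ℂ) 2 := lp.single 2 i 1

/-- Assembles a `2 × 2` block of operators into an operator on the direct sum. -/
noncomputable def blk {H₀ H₁ : Type*} [NormedAddCommGroup H₀] [NormedSpace ℂ H₀]
    [NormedAddCommGroup H₁] [NormedSpace ℂ H₁]
    (P : H₀ →L[ℂ] H₀) (Q : H₁ →L[ℂ] H₀) (R : H₀ →L[ℂ] H₁) (S : H₁ →L[ℂ] H₁) :
    (H₀ × H₁) →L[ℂ] (H₀ × H₁) :=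
  (P.coprod Q).prod (R.coprod S)

/-- Two continuous linear maps out of `ℓ²(ι)` agreeing on all basis vectors are equal. -/
lemma ext_bv {ι : Type*} {H : Type*} [NormedAddCommGroup H] [NormedSpace ℂ H]
    (A B : lp (fun _ : ι => ℂ) 2 →L[ℂ] H) (h : ∀ i, A (bv i) = B (bv i)) : A = B := by
  ext f
  have hs := lp.hasSum_single (p := 2) (E := fun _ : ι => ℂ) (by norm_num) f
  have hA : HasSum (fun i => A (lp.single 2 i (f i))) (A f) := A.hasSum hs
  have hB : HasSum (fun i => B (lp.single 2 i (f i))) (B f) := B.hasSum hs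
  refine hA.unique ?_
  convert hB using 2 with i
  have h1 : lp.single (E := fun _ : ι => ℂ) 2 i (f i) = f i • bv i := by
    rw [bv, ← lp.single_smul]; norm_num
  rw [h1, map_smul, map_smul, h]

lemma bv_apply {ι : Type*} (i j : ι) :
    (bv i : lp (fun _ : ι => ℂ) 2) j = if j = i then 1 else 0 := by
  rw [bv, lp.single_apply]
  split_ifs with h
  · subst h; simp
  · simp [Pi.single_apply, h]

/-- With `L = [[1, uτJ − τ],[0, 1 − uJ]]` and `M = [[1, τ],[uσ, 1 + uJ]]`
one has `M·L = [[1, 0],[uσ, (1 − uT)(1 − uJ)]]`. -/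
theorem statement_17 (G : SimpleGraph V) (hconn : G.Connected)
    (M : ℝ) (hM : 0 < M)
    (hval : ∀ x : V, (G.neighborSet x).Finite ∧ ((G.neighborSet x).ncard : ℝ) ≤ M)
    (w : G.Dart → ℝ) (hw : ∀ e, 0 < w e) (hsum : Summable w)
    (T : lp (fun _ : G.Dart => ℂ) 2 →L[ℂ] lp (fun _ : G.Dart => ℂ) 2)
    (hT : ∀ e e' : G.Dart, T (bv e) e'
      = if e'.toProd.1 = e.toProd.2 ∧ e' ≠ e.symm then (w e' : ℂ) else 0)
    (σ : lp (fun _ : V => ℂ) 2 →L[ℂ] lp (fun _ : G.Dart => ℂ) 2)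
    (hσ : ∀ (x : V) (e : G.Dart), σ (bv x) e = if e.toProd.1 = x then (w e : ℂ) else 0)
    (J : lp (fun _ : G.Dart => ℂ) 2 →L[ℂ] lp (fun _ : G.Dart => ℂ) 2)
    (hJ : ∀ e e' : G.Dart, J (bv e) e' = if e' = e.symm then (w e.symm : ℂ) else 0)
    (τ : lp (fun _ : G.Dart => ℂ) 2 →L[ℂ] lp (fun _ : V => ℂ) 2)
    (hτ : ∀ (e : G.Dart) (y : V), τ (bv e) y = if y = e.toProd.2 then 1 else 0) :
    ∀ u : ℂ,
      (blk 1 τ (u • σ) (1 + u • J)).comp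
          (blk 1 (u • (τ.comp J) - τ) 0 (1 - u • J))
        = blk 1 0 (u • σ) ((1 - u • T).comp (1 - u • J)) := by
  have hτbv : ∀ e : G.Dart, τ (bv e) = bv e.toProd.2 := by
    intro e
    apply lp.ext
    funext y
    rw [hτ, bv_apply]
  have hkey : σ.comp τ = T + J := by
    apply ext_bv
    intro e
    apply lp.ext
    funext e'
    rw [ContinuousLinearMap.comp_apply, hτbv, hσ]
    have : ((T + J) (bv e) : ∀ _ : G.Dart, ℂ) e' = T (bv e) e' + J (bv e) e' := by
      rw [ContinuousLinearMap.add_apply, lp.coeFn_add, Pi.add_apply]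
    rw [this, hT, hJ]
    by_cases h : e' = e.symm
    · subst h
      simp [Dart.symm]
    · simp [h]
  have hkey' : ∀ v, σ (τ v) = T v + J v := by
    intro v
    have := congrArg (fun A => A v) hkey
    simpa using this
  intro u
  apply ContinuousLinearMap.ext
  rintro ⟨x, e⟩
  have hblk : ∀ (P : _ →L[ℂ] _) Q R S (x : lp (fun _ : V => ℂ) 2) (e : lp (fun _ : G.Dart => ℂ) 2),
      blk P Q R S (x, e) = (P x + Q e, R x + S e) := by
    intros; rfl
  simp only [ContinuousLinearMap.comp_apply, hblk]
  refine Prod.ext ?_ ?_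
  · simp only [ContinuousLinearMap.add_apply, ContinuousLinearMap.sub_apply,
      ContinuousLinearMap.smul_apply, ContinuousLinearMap.one_apply,
      ContinuousLinearMap.comp_apply, ContinuousLinearMap.zero_apply, map_add, map_sub, map_smul,
      map_zero]
    abel
  · simp only [ContinuousLinearMap.add_apply, ContinuousLinearMap.sub_apply,
      ContinuousLinearMap.smul_apply, ContinuousLinearMap.one_apply,
      ContinuousLinearMap.comp_apply, ContinuousLinearMap.zero_apply, map_add, map_sub, map_smul,
      hkey', map_zero]
    module
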